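/- Let m ≥ 3 be an integer, ℓ a prime number dividing m, and f := ℓ·m. Then π_{f,m}(S_f) = S_m in ℚ[(ℤ/mℤ)ˣ]. -/

import Mathlib

open scoped BigOperators

/-- The Stickelberger element `S_f ∈ ℚ[(ℤ/fℤ)ˣ]`,
`S_f := −Σ_{1≤a≤f, gcd(a,f)=1} (a/f − 1/2)·[ā]⁻¹`. -/
noncomputable def stickelberger (f : ℕ) : MonoidAlgebra ℚ (ZMod f)ˣ :=
  -(∑ a ∈ Finset.Icc 1 f,
      if h : Nat.Coprime a f then
        ((a : ℚ) / f - 1 / 2) • MonoidAlgebra.single ((ZMod.unitOfCoprime a h)⁻¹) (1 : ℚ)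
      else 0)

/-- The map `π_{f,m} : ℚ[(ℤ/fℤ)ˣ] → ℚ[(ℤ/mℤ)ˣ]` induced by reduction mod `m`. -/
noncomputable def projMap (f m : ℕ) (h : m ∣ f) :
    MonoidAlgebra ℚ (ZMod f)ˣ →+* MonoidAlgebra ℚ (ZMod m)ˣ :=
  MonoidAlgebra.mapDomainRingHom ℚ (ZMod.unitsMap h)

/-- The summand of the Stickelberger element, as a function of `a`. -/
noncomputable def termS (n a : ℕ) : MonoidAlgebra ℚ (ZMod n)ˣ :=
  if h : Nat.Coprime a n then
    ((a : ℚ) / n - 1 / 2) • MonoidAlgebra.single ((ZMod.unitOfCoprime a h)⁻¹) (1 : ℚ)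
  else 0

lemma projMap_single (f m : ℕ) (h : m ∣ f) (u : (ZMod f)ˣ) (c : ℚ) :
    projMap f m h (MonoidAlgebra.single u c) = MonoidAlgebra.single (ZMod.unitsMap h u) c :=
  MonoidAlgebra.mapDomain_single

lemma stick_eq (n : ℕ) (hn : 2 ≤ n) :
    stickelberger n = -(∑ a ∈ Finset.range n, termS n a) := by
  have h0 : ¬ Nat.Coprime 0 n := by simp [Nat.Coprime]; omega
  have hn' : ¬ Nat.Coprime n n := by simp [Nat.Coprime]; omega
  unfold stickelberger
  congr 1
  rw [← Finset.Ico_add_one_right_eq_Icc, Finset.sum_Ico_succ_top (by omega),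
    Finset.sum_range_eq_add_Ico _ (by omega)]
  simp [termS, h0, hn', Finset.range_eq_Ico]

lemma coprime_iff (m ℓ k b : ℕ) (hdvd : ℓ ∣ m) :
    Nat.Coprime (k * m + b) (ℓ * m) ↔ Nat.Coprime b m := by
  obtain ⟨c, rfl⟩ := hdvd
  rw [Nat.coprime_mul_iff_right]
  constructor
  · rintro ⟨-, h2⟩
    rwa [show k * (ℓ * c) + b = b + (ℓ * c) * k by ring, Nat.coprime_add_mul_left_left] at h2
  · intro h
    constructor
    · have hb : Nat.Coprime b ℓ := Nat.Coprime.coprime_dvd_right (Dvd.intro c rfl) h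
      rwa [show k * (ℓ * c) + b = b + ℓ * (k * c) by ring, Nat.coprime_add_mul_left_left]
    · rwa [show k * (ℓ * c) + b = b + (ℓ * c) * k by ring, Nat.coprime_add_mul_left_left]

lemma unitsMap_eq (m ℓ k b : ℕ) (h : Nat.Coprime (k * m + b) (ℓ * m))
    (hb : Nat.Coprime b m) :
    ZMod.unitsMap (dvd_mul_left m ℓ) (ZMod.unitOfCoprime (k * m + b) h)
      = ZMod.unitOfCoprime b hb := by
  ext
  simp only [ZMod.unitsMap_def, Units.coe_map, ZMod.coe_unitOfCoprime, MonoidHom.coe_coe]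
  rw [map_natCast]
  push_cast
  simp [ZMod.natCast_self]

lemma sum_scalar (m ℓ b : ℕ) (hm : 0 < m) (hℓ : 0 < ℓ) :
    ∑ k ∈ Finset.range ℓ, (((k * m + b : ℕ) : ℚ) / ((ℓ * m : ℕ) : ℚ) - 1 / 2)
      = (b : ℚ) / m - 1 / 2 := by
  have hg : (∑ k ∈ Finset.range ℓ, (k : ℚ)) = ℓ * (ℓ - 1) / 2 := by
    have h2 : ((∑ k ∈ Finset.range ℓ, k) * 2 : ℕ) = (ℓ * (ℓ - 1) : ℕ) :=
      Finset.sum_range_id_mul_two ℓ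
    have h3 := congrArg (Nat.cast : ℕ → ℚ) h2
    push_cast [Nat.cast_sub hℓ] at h3
    linarith
  have hm' : (m : ℚ) ≠ 0 := by positivity
  have hℓ' : (ℓ : ℚ) ≠ 0 := by positivity
  push_cast
  rw [Finset.sum_sub_distrib, ← Finset.sum_div, Finset.sum_add_distrib, ← Finset.sum_mul, hg]
  simp only [Finset.sum_const, Finset.card_range, nsmul_eq_mul]
  field_simp
  ring

theorem statement2 (m : ℕ) (hm : 3 ≤ m) (ℓ : ℕ) (hℓ : ℓ.Prime) (hdvd : ℓ ∣ m) :
    projMap (ℓ * m) m (dvd_mul_left m ℓ) (stickelberger (ℓ * m)) = stickelberger m := by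
  have hℓ1 : 1 < ℓ := hℓ.one_lt
  have hm0 : 0 < m := by omega
  have hf : 2 ≤ ℓ * m := by nlinarith
  rw [stick_eq _ hf, stick_eq m (by omega), map_neg, map_sum]
  congr 1
  have reindex : ∀ (g : ℕ → MonoidAlgebra ℚ (ZMod m)ˣ),
      ∑ a ∈ Finset.range (ℓ * m), g a
        = ∑ p ∈ Finset.range ℓ ×ˢ Finset.range m, g (p.1 * m + p.2) := by
    intro g
    refine Finset.sum_nbij' (fun a => (a / m, a % m)) (fun p => p.1 * m + p.2) ?_ ?_ ?_ ?_ ?_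
    · intro a ha
      simp only [Finset.mem_range] at ha
      simp only [Finset.mem_product, Finset.mem_range]
      exact ⟨Nat.div_lt_of_lt_mul (by rwa [mul_comm] at ha), Nat.mod_lt _ hm0⟩
    · intro p hp
      simp only [Finset.mem_product, Finset.mem_range] at hp ⊢
      calc p.1 * m + p.2 < p.1 * m + m := by omega
        _ ≤ ℓ * m := by nlinarith [hp.1]
    · intro a _
      dsimp only
      rw [mul_comm]; exact Nat.div_add_mod a m
    · intro p hp
      simp only [Finset.mem_product, Finset.mem_range] at hp
      have h1 : (p.1 * m + p.2) / m = p.1 := by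
        rw [add_comm, Nat.add_mul_div_right _ _ hm0, Nat.div_eq_of_lt hp.2]; omega
      have h2 : (p.1 * m + p.2) % m = p.2 := by
        rw [add_comm, Nat.add_mul_mod_self_right]
        exact Nat.mod_eq_of_lt hp.2
      exact Prod.ext h1 h2
    · intro a _
      dsimp only
      rw [mul_comm, Nat.div_add_mod]
  rw [reindex, Finset.sum_product_right]
  refine Finset.sum_congr rfl fun b hb => ?_
  by_cases hcb : Nat.Coprime b m
  · have hterm : ∀ k, projMap (ℓ * m) m (dvd_mul_left m ℓ) (termS (ℓ * m) (k * m + b))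
        = (((k * m + b : ℕ) : ℚ) / ((ℓ * m : ℕ) : ℚ) - 1 / 2)
            • MonoidAlgebra.single ((ZMod.unitOfCoprime b hcb)⁻¹) (1 : ℚ) := by
      intro k
      have hc : Nat.Coprime (k * m + b) (ℓ * m) := (coprime_iff m ℓ k b hdvd).2 hcb
      rw [termS, dif_pos hc, MonoidAlgebra.smul_single', projMap_single, map_inv,
        unitsMap_eq m ℓ k b hc hcb, ← MonoidAlgebra.smul_single']
    simp_rw [hterm, ← Finset.sum_smul, sum_scalar m ℓ b hm0 (by omega), termS, dif_pos hcb]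
  · have hz : ∀ k ∈ Finset.range ℓ,
        projMap (ℓ * m) m (dvd_mul_left m ℓ) (termS (ℓ * m) (k * m + b)) = 0 := by
      intro k _
      rw [termS, dif_neg (fun hc => hcb ((coprime_iff m ℓ k b hdvd).1 hc)), map_zero]
    rw [Finset.sum_eq_zero hz, termS, dif_neg hcb]
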